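/- Let α ∈ (0,1], let k ≥ 1 be an integer, let c > 0, t > 0, and let x ∈ ℝ with |x| < ct. Then ∫_{-√(c²t²-x²)}^{√(c²t²-x²)} kα (c²t² - x² - y²)^{(αk-2)/2} / (2π (ct)^{αk}) dy = (c²t² - x²)^{(kα-1)/2} Γ(kα+1) / ((2ct)^{αk} Γ((kα+1)/2)²). -/

import Mathlib

open Real MeasureTheory

set_option maxHeartbeats 1000000

lemma realBeta {u v : ℝ} (hu : 0 < u) (hv : 0 < v) :
    ∫ x in (0:ℝ)..1, x ^ (u - 1) * (1 - x) ^ (v - 1) =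
      Real.Gamma u * Real.Gamma v / Real.Gamma (u + v) := by
  have key := Complex.Gamma_mul_Gamma_eq_betaIntegral (s := (u : ℂ)) (t := (v : ℂ))
    (by simpa using hu) (by simpa using hv)
  have hbe : Complex.betaIntegral u v =
      ((∫ x in (0:ℝ)..1, x ^ (u - 1) * (1 - x) ^ (v - 1)) : ℝ) := by
    rw [Complex.betaIntegral, ← intervalIntegral.integral_ofReal]
    refine intervalIntegral.integral_congr fun x hx => ?_
    rw [Set.uIcc_of_le zero_le_one] at hx
    have h1x : (0:ℝ) ≤ 1 - x := by linarith [hx.2]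
    simp only [Complex.ofReal_mul, Complex.ofReal_cpow hx.1, Complex.ofReal_cpow h1x,
      Complex.ofReal_sub, Complex.ofReal_one]
  rw [hbe, ← Complex.ofReal_add, Complex.Gamma_ofReal, Complex.Gamma_ofReal,
    Complex.Gamma_ofReal, ← Complex.ofReal_mul, ← Complex.ofReal_mul,
    Complex.ofReal_inj] at key
  have hG : Real.Gamma (u + v) ≠ 0 := (Real.Gamma_pos_of_pos (by linarith)).ne'
  field_simp [key]
  rw [key]; ring

lemma circ_int {r p : ℝ} (hr : 0 < r) (hp : 0 < p) :
    ∫ y in (-r)..r, (r ^ 2 - y ^ 2) ^ ((p - 2) / 2) =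
      (2 * r) ^ (p - 1) * Real.Gamma (p / 2) ^ 2 / Real.Gamma p := by
  have h2r : (0 : ℝ) < 2 * r := by linarith
  have hsub := intervalIntegral.integral_comp_mul_add
    (a := (0:ℝ)) (b := 1) (fun y => (r ^ 2 - y ^ 2) ^ ((p - 2) / 2)) h2r.ne' (-r)
  simp only [mul_zero, zero_add, mul_one, smul_eq_mul] at hsub
  have hends : 2 * r + -r = r := by ring
  rw [hends] at hsub
  have : ∫ y in (0 + -r)..r, (r ^ 2 - y ^ 2) ^ ((p - 2) / 2)
      = (2 * r) * ∫ x in (0:ℝ)..1, (r ^ 2 - (2 * r * x + -r) ^ 2) ^ ((p - 2) / 2) := by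
    rw [hsub]; field_simp
    rw [zero_add]
  rw [show (0 : ℝ) + -r = -r by ring] at this
  rw [this]
  have hcong : ∫ x in (0:ℝ)..1, (r ^ 2 - (2 * r * x + -r) ^ 2) ^ ((p - 2) / 2)
      = ∫ x in (0:ℝ)..1, (2 * r) ^ (p - 2) * (x ^ (p / 2 - 1) * (1 - x) ^ (p / 2 - 1)) := by
    refine intervalIntegral.integral_congr fun x hx => ?_
    rw [Set.uIcc_of_le zero_le_one] at hx
    have hx0 : 0 ≤ x := hx.1
    have hx1 : 0 ≤ 1 - x := by linarith [hx.2]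
    have hbase : r ^ 2 - (2 * r * x + -r) ^ 2 = (2 * r) ^ 2 * (x * (1 - x)) := by ring
    rw [hbase, Real.mul_rpow (by positivity) (by positivity),
      Real.mul_rpow hx0 hx1, ← Real.rpow_natCast (2 * r) 2, ← Real.rpow_mul h2r.le]
    norm_num
    rw [show (2 : ℝ) * ((p - 2) / 2) = p - 2 by ring]
    congr 2 <;> ring
  rw [hcong, intervalIntegral.integral_const_mul,
    realBeta (by linarith : (0:ℝ) < p / 2) (by linarith : (0:ℝ) < p / 2)]
  rw [show p / 2 + p / 2 = p by ring]
  rw [show (2 * r) ^ (p - 1) = (2 * r) * (2 * r) ^ (p - 2) by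
    rw [show p - 1 = 1 + (p - 2) by ring, Real.rpow_add h2r, Real.rpow_one]]
  ring

theorem stmt14 (a : ℝ) (ha : 0 < a ∧ a ≤ 1) (k : ℕ) (hk : 1 ≤ k) (c t x : ℝ)
    (hc : 0 < c) (ht : 0 < t) (hx : |x| < c * t) :
    (∫ y in (-(Real.sqrt (c ^ 2 * t ^ 2 - x ^ 2)))..(Real.sqrt (c ^ 2 * t ^ 2 - x ^ 2)),
        (k : ℝ) * a * (c ^ 2 * t ^ 2 - x ^ 2 - y ^ 2) ^ ((a * (k : ℝ) - 2) / 2) /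
          (2 * π * (c * t) ^ (a * (k : ℝ))))
      = (c ^ 2 * t ^ 2 - x ^ 2) ^ (((k : ℝ) * a - 1) / 2) * Real.Gamma ((k : ℝ) * a + 1) /
          ((2 * c * t) ^ (a * (k : ℝ)) * Real.Gamma (((k : ℝ) * a + 1) / 2) ^ 2) := by
  obtain ⟨ha0, ha1⟩ := ha
  have hk1 : (1 : ℝ) ≤ (k : ℝ) := by exact_mod_cast hk
  set l : ℝ := a * (k : ℝ) with hl
  have hlpos : 0 < l := by positivity
  have hct : 0 < c * t := by positivity
  have hP : 0 < c ^ 2 * t ^ 2 - x ^ 2 := by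
    have := abs_nonneg x
    nlinarith [sq_abs x]
  set P : ℝ := c ^ 2 * t ^ 2 - x ^ 2 with hPdef
  set r : ℝ := Real.sqrt P with hr
  have hrpos : 0 < r := Real.sqrt_pos.mpr hP
  have hr2 : r ^ 2 = P := Real.sq_sqrt hP.le
  have hD : (0:ℝ) < 2 * π * (c * t) ^ l := by positivity
  have hpull : ∀ y : ℝ, (k : ℝ) * a * (P - y ^ 2) ^ ((l - 2) / 2) / (2 * π * (c * t) ^ l)
      = (l / (2 * π * (c * t) ^ l)) * (r ^ 2 - y ^ 2) ^ ((l - 2) / 2) := by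
    intro y; rw [hr2, hl]; ring
  calc (∫ y in (-r)..r, (k : ℝ) * a * (P - y ^ 2) ^ ((l - 2) / 2) / (2 * π * (c * t) ^ l))
      = ∫ y in (-r)..r, (l / (2 * π * (c * t) ^ l)) * (r ^ 2 - y ^ 2) ^ ((l - 2) / 2) := by
        exact intervalIntegral.integral_congr fun y _ => hpull y
    _ = (l / (2 * π * (c * t) ^ l)) * ((2 * r) ^ (l - 1) * Real.Gamma (l / 2) ^ 2
          / Real.Gamma l) := by rw [intervalIntegral.integral_const_mul, circ_int hrpos hlpos]
    _ = P ^ (((k : ℝ) * a - 1) / 2) * Real.Gamma ((k : ℝ) * a + 1)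
          / ((2 * c * t) ^ l * Real.Gamma (((k : ℝ) * a + 1) / 2) ^ 2) := by
        have hka : (k : ℝ) * a = l := by rw [hl]; ring
        rw [hka]
        have hdup := Real.Gamma_mul_Gamma_add_half (l / 2)
        rw [show l / 2 + 1 / 2 = (l + 1) / 2 by ring, show 2 * (l / 2) = l by ring] at hdup
        have hG1 : 0 < Real.Gamma (l / 2) := Real.Gamma_pos_of_pos (by linarith)
        have hG2 : 0 < Real.Gamma ((l + 1) / 2) := Real.Gamma_pos_of_pos (by linarith)
        have hG : 0 < Real.Gamma l := Real.Gamma_pos_of_pos hlpos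
        have hGadd : Real.Gamma (l + 1) = l * Real.Gamma l := Real.Gamma_add_one hlpos.ne'
        have h2r : (2 * r) ^ (l - 1) = 2 ^ (l - 1) * P ^ ((l - 1) / 2) := by
          rw [Real.mul_rpow (by norm_num) hrpos.le, hr, Real.sqrt_eq_rpow,
            ← Real.rpow_mul hP.le]
          rw [show 1 / 2 * (l - 1) = (l - 1) / 2 by ring]
        have h2ct : (2 * c * t) ^ l = 2 ^ l * (c * t) ^ l := by
          rw [show 2 * c * t = 2 * (c * t) by ring, Real.mul_rpow (by norm_num) hct.le]
        have h2l1 : (2:ℝ) ^ (l - 1) = 2 ^ l / 2 := by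
          rw [Real.rpow_sub (by norm_num), Real.rpow_one]
        have h2l2 : (2:ℝ) ^ (1 - l) = 2 / 2 ^ l := by
          rw [Real.rpow_sub (by norm_num), Real.rpow_one]
        have h2lpos : (0:ℝ) < 2 ^ l := Real.rpow_pos_of_pos (by norm_num) l
        have hpi : Real.sqrt π ^ 2 = π := Real.sq_sqrt pi_pos.le
        rw [h2r, h2ct, hGadd, h2l1]
        rw [h2l2] at hdup
        have hG1eq : Real.Gamma (l / 2) = Real.Gamma l * (2 / 2 ^ l) * Real.sqrt π
            / Real.Gamma ((l + 1) / 2) := by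
          field_simp at hdup ⊢
          linarith [hdup]
        rw [hG1eq]
        have hctl : (0:ℝ) < (c * t) ^ l := Real.rpow_pos_of_pos hct l
        rw [← hpi]
        field_simp
        ring_nf
        rw [hpi]
        exact hpi
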